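/- arXiv:2510.12691 — 3 statements merged into one kernel-verified Lean document; each statement's English description precedes it below -/
import Mathlib

section
/- For any two probability measures P and Q with Q absolutely continuous with respect to P (and both admitting densities), E_{X∼Q}[(max(log(P(X)/Q(X)), 0))²] ≤ 4·KL(Q‖P). -/
open MeasureTheory

lemma two_sqrt_mul_le {a b : ℝ} (ha : 0 ≤ a) (hb : 0 ≤ b) :
    2 * Real.sqrt (a * b) ≤ a + b := by
  rw [Real.sqrt_mul ha]
  nlinarith [sq_nonneg (Real.sqrt a - Real.sqrt b), Real.sq_sqrt ha, Real.sq_sqrt hb,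
    Real.sqrt_nonneg a, Real.sqrt_nonneg b]

lemma sqrt_mul_eq {a b : ℝ} (ha : 0 ≤ a) (hb : 0 < b) :
    Real.sqrt (a * b) = Real.sqrt (a / b) * b := by
  have h : a * b = (a / b) * b ^ 2 := by field_simp
  rw [h, Real.sqrt_mul (div_nonneg ha hb.le), Real.sqrt_sq hb.le]

lemma pointwise_A {a b : ℝ} (ha : 0 ≤ a) (hb : 0 ≤ b) :
    b * (max (Real.log (a / b)) 0) ^ 2 ≤ 4 * (a + b - 2 * Real.sqrt (a * b)) := by
  rcases hb.eq_or_lt with hb0 | hb0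
  · simp [← hb0, ha]
  rcases le_or_gt a b with hab | hab
  · have h1 : Real.log (a / b) ≤ 0 := by
      apply Real.log_nonpos (by positivity)
      exact div_le_one_of_le₀ hab hb0.le
    rw [max_eq_right h1]
    have := two_sqrt_mul_le ha hb
    nlinarith
  · have ha0 : 0 < a := hb0.trans hab
    have ht : 1 < a / b := (one_lt_div hb0).mpr hab
    have hlogpos : 0 ≤ Real.log (a / b) := Real.log_nonneg ht.le
    rw [max_eq_left hlogpos]
    have hs : Real.sqrt (a / b) > 0 := Real.sqrt_pos.mpr (by positivity)
    have hlog2 : Real.log (Real.sqrt (a / b)) ≤ Real.sqrt (a / b) - 1 :=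
      Real.log_le_sub_one_of_pos hs
    rw [Real.log_sqrt (by positivity)] at hlog2
    have hkey : Real.sqrt (a * b) = Real.sqrt (a / b) * b := sqrt_mul_eq ha hb0
    have hsq : Real.sqrt (a / b) ^ 2 = a / b := Real.sq_sqrt (by positivity)
    have hqb : Real.sqrt (a / b) ^ 2 * b = a := by rw [hsq]; field_simp
    rw [hkey]
    have hL2 : Real.log (a / b) ^ 2 ≤ (2 * (Real.sqrt (a / b) - 1)) ^ 2 := by
      nlinarith [mul_nonneg hlogpos (by linarith : (0:ℝ) ≤ 2 * (Real.sqrt (a / b) - 1) - Real.log (a / b))]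
    have h5 : b * Real.log (a / b) ^ 2 ≤ b * (2 * (Real.sqrt (a / b) - 1)) ^ 2 :=
      mul_le_mul_of_nonneg_left hL2 hb0.le
    nlinarith [hqb, h5]

lemma pointwise_B {a b : ℝ} (ha : 0 ≤ a) (hb : 0 ≤ b) (habs : a = 0 → b = 0) :
    2 * b - 2 * Real.sqrt (a * b) ≤ b * Real.log (b / a) := by
  rcases hb.eq_or_lt with hb0 | hb0
  · simp [← hb0]
  have ha0 : 0 < a := by
    rcases ha.eq_or_lt with h | h
    · exact absurd (habs h.symm) hb0.ne'
    · exact h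
  have hs : 0 < Real.sqrt (a / b) := Real.sqrt_pos.mpr (by positivity)
  have hlog2 : Real.log (Real.sqrt (a / b)) ≤ Real.sqrt (a / b) - 1 :=
    Real.log_le_sub_one_of_pos hs
  rw [Real.log_sqrt (by positivity)] at hlog2
  have hflip : Real.log (b / a) = - Real.log (a / b) := by
    rw [← Real.log_inv, inv_div]
  have hkey : Real.sqrt (a * b) = Real.sqrt (a / b) * b := sqrt_mul_eq ha hb0
  rw [hflip, hkey]
  nlinarith [hb0.le]

/-- For probability measures `P`, `Q` with densities `p`, `q` w.r.t. a base measure `μ`,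
with `Q ≪ P`, the expectation under `Q` of the squared positive part of the
log-likelihood ratio `log(p/q)` is at most `4 · KL(Q‖P)`. -/
theorem sq_pos_log_ratio_le_four_kl
    {α : Type*} [MeasurableSpace α] (μ : Measure α) (p q : α → ℝ)
    (hp : ∀ x, 0 ≤ p x) (hq : ∀ x, 0 ≤ q x)
    (habs : ∀ x, p x = 0 → q x = 0)
    (hpmeas : Measurable p) (hqmeas : Measurable q)
    (hpint : ∫ x, p x ∂μ = 1) (hqint : ∫ x, q x ∂μ = 1)
    (hint1 : Integrable (fun x => q x * (max (Real.log (p x / q x)) 0) ^ 2) μ)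
    (hint2 : Integrable (fun x => q x * Real.log (q x / p x)) μ) :
    ∫ x, q x * (max (Real.log (p x / q x)) 0) ^ 2 ∂μ
      ≤ 4 * ∫ x, q x * Real.log (q x / p x) ∂μ := by
  set s : α → ℝ := fun x => Real.sqrt (p x * q x) with hs_def
  have hp_i : Integrable p μ := by
    by_contra h
    rw [integral_undef h] at hpint
    norm_num at hpint
  have hq_i : Integrable q μ := by
    by_contra h
    rw [integral_undef h] at hqint
    norm_num at hqint
  have hs_i : Integrable s μ := by
    refine (hp_i.add hq_i).mono ((hpmeas.mul hqmeas).sqrt.aestronglyMeasurable)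
      (ae_of_all _ fun x => ?_)
    simp only [Pi.add_apply]
    rw [Real.norm_of_nonneg (Real.sqrt_nonneg _),
      Real.norm_of_nonneg (add_nonneg (hp x) (hq x))]
    have := two_sqrt_mul_le (hp x) (hq x)
    have := Real.sqrt_nonneg (p x * q x)
    linarith
  have hA_i : Integrable (fun x => 4 * (p x + q x - 2 * s x)) μ :=
    (((hp_i.add hq_i).sub (hs_i.const_mul 2)).const_mul 4)
  have hB_i : Integrable (fun x => 2 * q x - 2 * s x) μ :=
    ((hq_i.const_mul 2).sub (hs_i.const_mul 2))
  have step1 : ∫ x, q x * (max (Real.log (p x / q x)) 0) ^ 2 ∂μ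
      ≤ ∫ x, 4 * (p x + q x - 2 * s x) ∂μ :=
    integral_mono hint1 hA_i (fun x => pointwise_A (hp x) (hq x))
  have hIs : ∫ x, 4 * (p x + q x - 2 * s x) ∂μ
      = 4 * ((∫ x, p x ∂μ) + (∫ x, q x ∂μ) - 2 * ∫ x, s x ∂μ) := by
    rw [integral_const_mul, integral_sub (f := fun x => p x + q x) (hp_i.add hq_i) (hs_i.const_mul 2),
      integral_add hp_i hq_i, integral_const_mul]
  have hIB : ∫ x, (2 * q x - 2 * s x) ∂μ
      = 2 * (∫ x, q x ∂μ) - 2 * ∫ x, s x ∂μ := by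
    rw [integral_sub (f := fun x => 2 * q x) (hq_i.const_mul 2) (hs_i.const_mul 2), integral_const_mul,
      integral_const_mul]
  have step2 : ∫ x, (2 * q x - 2 * s x) ∂μ ≤ ∫ x, q x * Real.log (q x / p x) ∂μ :=
    integral_mono hB_i hint2 (fun x => pointwise_B (hp x) (hq x) (habs x))
  rw [hpint, hqint] at hIs
  rw [hqint] at hIB
  linarith
end

section
/- Last-iterate convergence of the EM iteration: for every K ≥ 0, KL(P_Y* ‖ P_Y^{(K)}) ≤ KL(P_X* ‖ π^{(0)})/(K+1) + max_{k≤K} ε̃_SM^{(k)} + Σ_{k=0}^{K} ε_SM^{(k)}. -/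
/-- Last-iterate convergence of the EM iteration.  Writing
`d k = KL(P_Y* ‖ P_Y^{(k)})`, `ε k = ε_SM^{(k)}`, `εt k = ε̃_SM^{(k)}` and
`b0 = KL(P_X* ‖ π^{(0)})`, assume the monotonicity inequality `d (k+1) ≤ d k + ε k` for
every `k` and the average-iterate bound for every `K`.  Then for every `K ≥ 0`,
`d K ≤ b0/(K+1) + max_{k≤K} εt k + Σ_{k=0}^{K} ε k`. -/
theorem em_last_iterate_convergence
    (d ε εt : ℕ → ℝ) (b0 : ℝ)
    (hd : ∀ k, 0 ≤ d k) (hε : ∀ k, 0 ≤ ε k) (hεt : ∀ k, 0 ≤ εt k) (hb0 : 0 ≤ b0)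
    (hmono : ∀ k, d (k + 1) ≤ d k + ε k)
    (havg : ∀ K : ℕ, (∑ k ∈ Finset.range (K + 1), d k) / (K + 1)
      ≤ b0 / (K + 1) + ⨆ k : Fin (K + 1), εt k)
    (K : ℕ) :
    d K ≤ b0 / (K + 1) + (⨆ k : Fin (K + 1), εt k)
      + ∑ k ∈ Finset.range (K + 1), ε k := by
  set E := ∑ k ∈ Finset.range (K + 1), ε k with hE
  -- step 1: d (k+n) ≤ d k + ∑_{ℓ∈[k,k+n)} ε ℓ
  have step : ∀ k n : ℕ, d (k + n) ≤ d k + ∑ ℓ ∈ Finset.Ico k (k + n), ε ℓ := by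
    intro k n
    induction n with
    | zero => simp
    | succ n ih =>
      have : d (k + n + 1) ≤ d (k + n) + ε (k + n) := hmono _
      calc d (k + (n + 1)) = d (k + n + 1) := by ring_nf
        _ ≤ d (k + n) + ε (k + n) := hmono _
        _ ≤ (d k + ∑ ℓ ∈ Finset.Ico k (k + n), ε ℓ) + ε (k + n) := by linarith
        _ = d k + ∑ ℓ ∈ Finset.Ico k (k + (n + 1)), ε ℓ := by
            rw [show k + (n + 1) = (k + n) + 1 by ring,
              Finset.sum_Ico_succ_top (by omega)]
            ring
  -- step 2: for k ≤ K, d K ≤ d k + E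
  have step2 : ∀ k ∈ Finset.range (K + 1), d K ≤ d k + E := by
    intro k hk
    rw [Finset.mem_range] at hk
    have h1 := step k (K - k)
    have hk' : k + (K - k) = K := by omega
    rw [hk'] at h1
    refine h1.trans (add_le_add_right ?_ _)
    apply Finset.sum_le_sum_of_subset_of_nonneg
    · intro x hx
      rw [Finset.mem_Ico] at hx
      rw [Finset.mem_range]; omega
    · intro i _ _; exact hε i
  -- step 3: sum over k
  have hsum : (K + 1 : ℝ) * d K ≤ (∑ k ∈ Finset.range (K + 1), d k) + (K + 1 : ℝ) * E := by
    have := Finset.sum_le_sum step2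
    simp only [Finset.sum_add_distrib, Finset.sum_const, Finset.card_range,
      nsmul_eq_mul] at this
    push_cast at this ⊢
    linarith
  have hKpos : (0:ℝ) < (K : ℝ) + 1 := by positivity
  have hdiv : d K ≤ (∑ k ∈ Finset.range (K + 1), d k) / (K + 1) + E := by
    rw [div_add' _ _ _ (ne_of_gt hKpos), le_div_iff₀ hKpos]
    linarith [hsum]
  calc d K ≤ (∑ k ∈ Finset.range (K + 1), d k) / (K + 1) + E := hdiv
    _ ≤ (b0 / (K + 1) + ⨆ k : Fin (K + 1), εt k) + E := by
        exact add_le_add_left (havg K) _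
    _ = b0 / (K + 1) + (⨆ k : Fin (K + 1), εt k) + E := by ring
end

section
/- Linear convergence of EM under identifiability: if KL(P_X* ‖ π^{(0)}) ≤ R and ε̃_SM^{(k)} ≤ R/κ for all k, then KL(P_X* ‖ π^{(K)}) ≤ exp(−K/(κ+1))·KL(P_X* ‖ π^{(0)}) + (κ+1)·max_k ε̃_SM^{(k)}. -/
/-- Linear convergence of EM under identifiability.  Writing
`a k = KL(P_X* ‖ π^{(k)})`, `d k = KL(P_Y* ‖ P_Y^{(k)})` (with `P_Y^{(k)} = Q∘π^{(k)}`)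
and `εt k = ε̃_SM^{(k)}`, the identifiability assumption states that `a k ≤ R` implies
`a k ≤ κ · d k`, and the one-step descent inequality `d k ≤ a k − a (k+1) + εt k` holds
for each `k`.  If moreover `a 0 ≤ R` and `εt k ≤ R/κ` for all `k`, then
`a K ≤ exp(−K/(κ+1))·a 0 + (κ+1)·sup_k εt k`. -/
theorem em_linear_convergence
    (a d εt : ℕ → ℝ) (κ R : ℝ) (hκ : 1 ≤ κ) (hR : 0 ≤ R)
    (ha : ∀ k, 0 ≤ a k) (hd : ∀ k, 0 ≤ d k) (hεt : ∀ k, 0 ≤ εt k)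
    (hident : ∀ k, a k ≤ R → a k ≤ κ * d k)
    (hstep : ∀ k, d k ≤ a k - a (k + 1) + εt k)
    (ha0 : a 0 ≤ R) (hεtR : ∀ k, εt k ≤ R / κ)
    (K : ℕ) :
    a K ≤ Real.exp (-(K : ℝ) / (κ + 1)) * a 0 + (κ + 1) * ⨆ k, εt k := by
  have hκ0 : (0:ℝ) < κ := lt_of_lt_of_le one_pos hκ
  set E := ⨆ k, εt k with hE
  have hbdd : BddAbove (Set.range εt) := ⟨R / κ, by rintro _ ⟨k, rfl⟩; exact hεtR k⟩
  have hEk : ∀ k, εt k ≤ E := fun k => le_ciSup hbdd k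
  have hE0 : (0:ℝ) ≤ E := le_trans (hεt 0) (hEk 0)
  obtain ⟨ρ, hρ⟩ : ∃ ρ : ℝ, ρ = 1 - 1/κ := ⟨_, rfl⟩
  have hρ0 : (0:ℝ) ≤ ρ := by
    have h1 : 1/κ ≤ 1 := by rw [div_le_one hκ0]; exact hκ
    rw [hρ]; linarith
  -- one-step recursion with invariance
  have hrec : ∀ k, a k ≤ R → a (k+1) ≤ ρ * a k + εt k ∧ a (k+1) ≤ R := by
    intro k hk
    have h1 := hident k hk
    have h2 := hstep k
    have h3 : a k ≤ κ * (a k - a (k+1) + εt k) := by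
      calc a k ≤ κ * d k := h1
        _ ≤ κ * (a k - a (k+1) + εt k) := by
            exact mul_le_mul_of_nonneg_left h2 (le_of_lt hκ0)
    have h4 : κ * a (k+1) ≤ (κ - 1) * a k + κ * εt k := by nlinarith
    have h5 : a (k+1) ≤ ρ * a k + εt k := by
      have heq : ρ * a k + εt k = ((κ - 1) * a k + κ * εt k) / κ := by
        field_simp [hρ]; rw [hρ]; field_simp
      rw [heq, le_div_iff₀ hκ0]; linarith
    refine ⟨h5, ?_⟩
    have h6 : ρ * a k ≤ ρ * R := mul_le_mul_of_nonneg_left hk hρ0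
    have h7 : εt k ≤ R / κ := hεtR k
    have h8 : ρ * R + R / κ = R := by field_simp [hρ]; rw [hρ]; field_simp; ring
    nlinarith [h5, h6, h7, h8]
  have hRall : ∀ k, a k ≤ R := by
    intro k; induction k with
    | zero => exact ha0
    | succ n ih => exact (hrec n ih).2
  -- unrolled recursion
  have hmain : ∀ k, a k ≤ ρ ^ k * a 0 + κ * E := by
    intro k; induction k with
    | zero => simpa using by nlinarith [ha 0]
    | succ n ih =>
      have h1 : a (n+1) ≤ ρ * a n + εt n := (hrec n (hRall n)).1
      have h2 : ρ * a n ≤ ρ * (ρ ^ n * a 0 + κ * E) := mul_le_mul_of_nonneg_left ih hρ0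
      have h3 : ρ * κ = κ - 1 := by field_simp [hρ]; rw [hρ]; field_simp
      have h4 : εt n ≤ E := hEk n
      calc a (n+1) ≤ ρ * (ρ ^ n * a 0 + κ * E) + E := by linarith
        _ = ρ ^ (n+1) * a 0 + (ρ * κ + 1) * E := by ring
        _ = ρ ^ (n+1) * a 0 + κ * E := by rw [h3]; ring
  -- compare geometric factor with exponential
  have hκ1 : (0:ℝ) < κ + 1 := by linarith
  have hexp1 : ρ ≤ Real.exp (-1 / (κ + 1)) := by
    have h := Real.add_one_le_exp (-1 / (κ + 1))
    have h2 : ρ ≤ -1 / (κ + 1) + 1 := by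
      have hx : -1 / (κ + 1) = -(1 / (κ + 1)) := by ring
      have hy : 1 / (κ + 1) ≤ 1 / κ := one_div_le_one_div_of_le hκ0 (by linarith)
      rw [hρ, hx]; linarith
    linarith
  have hpow : ρ ^ K ≤ Real.exp (-(K : ℝ) / (κ + 1)) := by
    calc ρ ^ K ≤ Real.exp (-1 / (κ + 1)) ^ K := pow_le_pow_left₀ hρ0 hexp1 K
      _ = Real.exp ((K : ℝ) * (-1 / (κ + 1))) := (Real.exp_nat_mul _ K).symm
      _ = Real.exp (-(K : ℝ) / (κ + 1)) := by ring_nf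
  have := hmain K
  have h5 : ρ ^ K * a 0 ≤ Real.exp (-(K : ℝ) / (κ + 1)) * a 0 :=
    mul_le_mul_of_nonneg_right hpow (ha 0)
  nlinarith [hE0]
end
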